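/- Let a, x, y, t, q be rational numbers with q ≠ 0 and t ≠ 0. Set p = q·t·y, s = q·x, r = q·t, and then A = p + q, C = p − q, D = r + s, B = r − s. Then A⁴ + a·B⁴ = C⁴ + a·D⁴ holds if and only if a·x³ − y = t²·(y³ − a·x). -/
import Mathlib

theorem stmt_0 (a x y t q : ℚ) (hq : q ≠ 0) (ht : t ≠ 0)
    (p s r A C D B : ℚ)
    (hp : p = q * t * y) (hs : s = q * x) (hr : r = q * t)
    (hA : A = p + q) (hC : C = p - q) (hD : D = r + s) (hB : B = r - s) :
    A ^ 4 + a * B ^ 4 = C ^ 4 + a * D ^ 4 ↔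
      a * x ^ 3 - y = t ^ 2 * (y ^ 3 - a * x) := by
  subst hp hs hr hA hC hD hB
  have hqt : (8 : ℚ) * q ^ 4 * t ≠ 0 := by positivity
  constructor
  · intro h
    have h2 : 8 * q ^ 4 * t * ((a * x ^ 3 - y) - t ^ 2 * (y ^ 3 - a * x)) = 0 := by
      linear_combination -h
    have := mul_eq_zero.mp h2
    rcases this with h3 | h3
    · exact absurd h3 hqt
    · linarith [sub_eq_zero.mp h3]
  · intro h
    linear_combination (-8 : ℚ) * q ^ 4 * t * h
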